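/- Let X be an infinite-dimensional separable F-space over ℂ, and suppose that for each m ∈ ℕ a residual subset R_m ⊆ X^m is given. Then for every ℓ ∈ ℕ there exist pairwise disjoint countable dense subsets E_1, ..., E_ℓ of X, contained in a common Mycielski set K \ {0}, such that ⋃_{j=1}^ℓ E_j is a linearly independent set. -/

import Mathlib

open Filter Topology

section MycielskiAux

open Metric Set



section Aux

variable {X : Type*} [AddCommGroup X] [Module ℂ X] [MetricSpace X]
  [IsTopologicalAddGroup X] [ContinuousSMul ℂ X]

lemma aux_dense_compl_span (hinf : ¬ FiniteDimensional ℂ X) (s : Set X) (hs : s.Finite) :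
    IsOpen ((Submodule.span ℂ s : Set X))ᶜ ∧ Dense ((Submodule.span ℂ s : Set X))ᶜ := by
  haveI : FiniteDimensional ℂ (Submodule.span ℂ s) := FiniteDimensional.span_of_finite ℂ hs
  have hcl : IsClosed (Submodule.span ℂ s : Set X) :=
    Submodule.closed_of_finiteDimensional _
  refine ⟨hcl.isOpen_compl, ?_⟩
  rw [dense_iff_inter_open]
  rintro U hU ⟨x, hx⟩
  by_contra h
  have hU' : U ⊆ (Submodule.span ℂ s : Set X) := by
    intro y hy
    by_contra hy'
    exact h ⟨y, hy, hy'⟩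
  have hint : (interior (Submodule.span ℂ s : Set X)).Nonempty :=
    ⟨x, mem_interior.2 ⟨U, hU', hU, hx⟩⟩
  haveI : NeBot (𝓝[{ x : ℂ | IsUnit x }] (0:ℂ)) := by
    have hu : { x : ℂ | IsUnit x } = {(0:ℂ)}ᶜ := by
      ext z; simp [isUnit_iff_ne_zero]
    rw [hu]
    exact NormedField.nhdsNE_neBot 0
  have htop := Submodule.eq_top_of_nonempty_interior' _ hint
  haveI : FiniteDimensional ℂ (⊤ : Submodule ℂ X) := htop ▸ inferInstance
  exact hinf (Submodule.topEquiv (R := ℂ) (M := X)).finiteDimensional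

/-- In every finite list of nonempty open boxes one can choose a linearly independent tuple. -/
lemma aux_exists_indep (hinf : ¬ FiniteDimensional ℂ X) :
    ∀ (k : ℕ) (B : Fin k → Set X), (∀ i, IsOpen (B i)) → (∀ i, (B i).Nonempty) →
      ∃ y : Fin k → X, (∀ i, y i ∈ B i) ∧ LinearIndependent ℂ y := by
  intro k
  induction k with
  | zero =>
    intro B _ _
    exact ⟨fun i => i.elim0, fun i => i.elim0, linearIndependent_empty_type⟩
  | succ n ih =>
    intro B hBo hBne
    obtain ⟨y, hy, hyi⟩ := ih (fun i => B i.castSucc) (fun i => hBo _) (fun i => hBne _)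
    obtain ⟨hso, hsd⟩ := aux_dense_compl_span hinf (Set.range y) (Set.finite_range y)
    obtain ⟨w, hw1, hw2⟩ := hsd.exists_mem_open (hBo (Fin.last n)) (hBne (Fin.last n))
    refine ⟨Fin.snoc y w, ?_, ?_⟩
    · intro i
      induction i using Fin.lastCases with
      | last => simpa using hw2
      | cast j => simpa using hy j
    · exact linearIndependent_fin_snoc.2 ⟨hyi, hw1⟩

lemma aux_dense_indep (hinf : ¬ FiniteDimensional ℂ X) (k : ℕ) :
    Dense { y : Fin k → X | LinearIndependent ℂ y } := by
  rw [Metric.dense_iff]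
  intro y r hr
  obtain ⟨z, hz, hzi⟩ := aux_exists_indep hinf k (fun i => Metric.ball (y i) r)
    (fun i => isOpen_ball) (fun i => ⟨y i, mem_ball_self hr⟩)
  refine ⟨z, ?_, hzi⟩
  rw [mem_ball, dist_pi_lt_iff hr]
  intro i
  exact hz i

end Aux


section Aux2

variable {X : Type*} [AddCommGroup X] [Module ℂ X] [MetricSpace X]
  [IsTopologicalAddGroup X] [ContinuousSMul ℂ X]

lemma aux_isOpen_indep (k : ℕ) :
    IsOpen { y : Fin k → X | LinearIndependent ℂ y } := by
  rw [isOpen_iff_mem_nhds]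
  intro f hf
  by_contra hnf
  -- extract a sequence g n → f of dependent tuples
  have hseq : ∀ n : ℕ, ∃ g : Fin k → X, dist g f < 1 / (n + 1) ∧
      ¬ LinearIndependent ℂ g := by
    intro n
    by_contra h
    push_neg at h
    exact hnf (Metric.mem_nhds_iff.2 ⟨1 / (n+1), by positivity, fun g hg => h g hg⟩)
  choose g hgd hgi using hseq
  have hgf : Tendsto g atTop (𝓝 f) := by
    rw [tendsto_iff_dist_tendsto_zero]
    refine squeeze_zero (fun n => dist_nonneg) (fun n => (hgd n).le) ?_
    exact tendsto_one_div_add_atTop_nhds_zero_nat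
  -- dependence gives coefficients
  have hcoef : ∀ n, ∃ a : Fin k → ℂ, ∑ i, a i • g n i = 0 ∧ a ≠ 0 := by
    intro n
    have := Fintype.not_linearIndependent_iff.1 (hgi n)
    obtain ⟨a, ha, i, hi⟩ := this
    exact ⟨a, ha, fun h => hi (by simp [h])⟩
  choose a ha ha0 using hcoef
  -- normalize
  set b : ℕ → Fin k → ℂ := fun n => ((‖a n‖)⁻¹ : ℂ) • a n with hb
  have hbn : ∀ n, ‖b n‖ = 1 := by
    intro n
    have : ‖a n‖ ≠ 0 := norm_ne_zero_iff.2 (ha0 n)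
    rw [hb]
    simp only [norm_smul, norm_inv, Complex.norm_real, norm_norm]
    rw [inv_mul_cancel₀ this]
  have hbsum : ∀ n, ∑ i, b n i • g n i = 0 := by
    intro n
    rw [hb]
    simp only [Pi.smul_apply, smul_eq_mul, ← smul_smul]
    rw [← Finset.smul_sum, ha n, smul_zero]
  -- compactness of the sphere
  have hsph : IsCompact (Metric.sphere (0 : Fin k → ℂ) 1) := isCompact_sphere 0 1
  have hbmem : ∀ n, b n ∈ Metric.sphere (0 : Fin k → ℂ) 1 := by
    intro n; simp [mem_sphere_iff_norm, hbn n]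
  obtain ⟨c, hc, φ, hφ, hbc⟩ := hsph.tendsto_subseq hbmem
  -- pass to the limit
  have hΦ : Continuous fun p : (Fin k → ℂ) × (Fin k → X) => ∑ i, p.1 i • p.2 i := by
    refine continuous_finset_sum _ fun i _ => ?_
    exact ((continuous_apply i).comp continuous_fst).smul
      ((continuous_apply i).comp continuous_snd)
  have hlim : Tendsto (fun n => ∑ i, b (φ n) i • g (φ n) i) atTop
      (𝓝 (∑ i, c i • f i)) := by
    have hgφ : Tendsto (g ∘ φ) atTop (𝓝 f) := hgf.comp hφ.tendsto_atTop
    have hpair : Tendsto (fun n => (b (φ n), g (φ n))) atTop (𝓝 (c, f)) := by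
      exact Tendsto.prodMk_nhds hbc hgφ
    have h2 := (hΦ.tendsto (c, f)).comp hpair
    simpa only [Function.comp_def] using h2
  have hzero : ∑ i, c i • f i = 0 := by
    have : Tendsto (fun n => ∑ i, b (φ n) i • g (φ n) i) atTop (𝓝 0) := by
      simp only [hbsum]
      exact tendsto_const_nhds
    exact tendsto_nhds_unique hlim this
  have hc0 : c ≠ 0 := by
    intro h
    rw [h] at hc
    simp at hc
  obtain ⟨i, hi⟩ := Function.ne_iff.1 hc0
  exact hi (Fintype.linearIndependent_iff.1 hf c hzero i)

end Aux2


section Aux3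

variable {X : Type*} [MetricSpace X] [CompleteSpace X]

/-- Pulling back a dense set along an injective reindexing is dense. -/
lemma aux_dense_reindex {ι : Type*} {m : ℕ} (σ : Fin m → ι) (hσ : Function.Injective σ)
    {D : Set (Fin m → X)} (hD : Dense D) :
    Dense { q : ι → X | (fun i => q (σ i)) ∈ D } := by
  classical
  rw [dense_iff_inter_open]
  rintro U hU ⟨q₀, hq₀⟩
  obtain ⟨I, u, hu, hsub⟩ := isOpen_pi_iff.1 hU q₀ hq₀
  set B : Fin m → Set X := fun i => if σ i ∈ I then u (σ i) else univ with hB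
  have hBo : ∀ i, IsOpen (B i) := by
    intro i
    rw [hB]
    dsimp only
    split
    · exact (hu _ (by assumption)).1
    · exact isOpen_univ
  have hBmem : (fun i => q₀ (σ i)) ∈ Set.pi univ B := by
    intro i _
    rw [hB]
    dsimp only
    split
    · exact (hu _ (by assumption)).2
    · trivial
  have hbox : IsOpen (Set.pi univ B) := isOpen_set_pi finite_univ (fun i _ => hBo i)
  obtain ⟨y, hy1, hy2⟩ := hD.inter_open_nonempty _ hbox ⟨_, hBmem⟩
  have key : (fun i => (fun a => if h : ∃ i, σ i = a then y h.choose else q₀ a) (σ i)) = y := by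
    funext i
    have h : ∃ j, σ j = σ i := ⟨i, rfl⟩
    simp only [dif_pos h]
    congr 1
    exact hσ h.choose_spec
  refine ⟨fun a => if h : ∃ i, σ i = a then y h.choose else q₀ a, ?_, ?_⟩
  · apply hsub
    intro a ha
    dsimp only
    split
    · next h =>
      have hc : σ h.choose = a := h.choose_spec
      have h1 := hy1 h.choose (mem_univ _)
      rw [hB] at h1
      dsimp only at h1
      rw [hc] at h1
      rwa [if_pos (Finset.mem_coe.1 ha)] at h1
    · exact (hu a ha).2
  · simpa only [mem_setOf_eq, key] using hy2

/-- The key selection lemma. -/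
lemma aux_key {ι : Type*} [Fintype ι] (O : ι → Set X) (hOo : ∀ i, IsOpen (O i))
    (hOne : ∀ i, (O i).Nonempty) (G : ∀ m : ℕ, Set (Fin m → X))
    (hGo : ∀ m, IsOpen (G m)) (hGd : ∀ m, Dense (G m)) (ε₀ : ℝ) (hε₀ : 0 < ε₀) :
    ∃ (q : ι → X) (ρ : ℝ), 0 < ρ ∧ ρ ≤ ε₀ ∧
      (∀ i, Metric.closedBall (q i) ρ ⊆ O i) ∧
      (∀ (m : ℕ) (σ : Fin m → ι), Function.Injective σ →
        ∀ y : Fin m → X, (∀ a, dist (y a) (q (σ a)) ≤ ρ) → y ∈ G m) := by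
  classical
  set N := Fintype.card ι with hN
  set D : (Σ m : Fin (N + 1), (Fin (m : ℕ) → ι)) → Set (ι → X) := fun p =>
    if Function.Injective p.2 then { q : ι → X | (fun i => q (p.2 i)) ∈ G p.1 } else univ
    with hD
  have hDo : ∀ p, IsOpen (D p) := by
    intro p
    rw [hD]
    dsimp only
    split
    · exact (hGo _).preimage (continuous_pi fun i => continuous_apply _)
    · exact isOpen_univ
  have hDd : ∀ p, Dense (D p) := by
    intro p
    rw [hD]
    dsimp only
    split
    · exact aux_dense_reindex _ (by assumption) (hGd _)
    · exact dense_univ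
  have hΩo : IsOpen (⋂ p, D p) := isOpen_iInter_of_finite hDo
  have hΩd : Dense (⋂ p, D p) := dense_iInter_of_isOpen hDo hDd
  have hboxo : IsOpen (Set.pi univ O) := isOpen_set_pi finite_univ (fun i _ => hOo i)
  have hboxne : (Set.pi univ O).Nonempty := ⟨fun i => (hOne i).some, fun i _ => (hOne i).some_mem⟩
  obtain ⟨Q, hQbox, hQΩ⟩ := hΩd.inter_open_nonempty _ hboxo hboxne
  obtain ⟨ε, hε, hball⟩ := Metric.isOpen_iff.1 (hboxo.inter hΩo) Q ⟨hQbox, hQΩ⟩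
  have hρpos : 0 < min (ε / 2) ε₀ := lt_min (by linarith) hε₀
  have hρε : min (ε / 2) ε₀ < ε := lt_of_le_of_lt (min_le_left _ _) (by linarith)
  refine ⟨Q, min (ε / 2) ε₀, hρpos, min_le_right _ _, ?_, ?_⟩
  · intro i x hx
    set z := Function.update Q i x with hz
    have hdz : dist z Q ≤ min (ε / 2) ε₀ := by
      rw [dist_pi_le_iff hρpos.le]
      intro j
      rcases eq_or_ne j i with rfl | hji
      · rw [hz]; simpa using hx
      · rw [hz, Function.update_of_ne hji]
        simpa using hρpos.le
    have hzb : z ∈ Metric.ball Q ε := lt_of_le_of_lt hdz hρε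
    have hzbox := (hball hzb).1
    have h2 := hzbox i (mem_univ i)
    rwa [hz, Function.update_self] at h2
  · intro m σ hσ y hy
    have hm : m ≤ N := by
      have := Fintype.card_le_of_injective σ hσ
      simpa [hN] using this
    set z : ι → X := fun a => if h : ∃ i, σ i = a then y h.choose else Q a with hz
    have hzσ : ∀ i, z (σ i) = y i := by
      intro i
      rw [hz]
      dsimp only
      have h : ∃ j, σ j = σ i := ⟨i, rfl⟩
      simp only [dif_pos h]
      congr 1
      exact hσ h.choose_spec
    have hdz : dist z Q ≤ min (ε / 2) ε₀ := by
      rw [dist_pi_le_iff hρpos.le]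
      intro j
      rw [hz]
      dsimp only
      split
      · next h =>
        have hc : σ h.choose = j := h.choose_spec
        calc dist (y h.choose) (Q j) = dist (y h.choose) (Q (σ h.choose)) := by rw [hc]
          _ ≤ _ := hy h.choose
      · simpa using hρpos.le
    have hzΩ : z ∈ ⋂ p, D p := (hball (lt_of_le_of_lt hdz hρε)).2
    have hzD := mem_iInter.1 hzΩ ⟨⟨m, Nat.lt_succ_of_le hm⟩, σ⟩
    rw [hD] at hzD
    dsimp only at hzD
    rw [if_pos hσ] at hzD
    simp only [mem_setOf_eq] at hzD
    have hzy : (fun i => z (σ i)) = y := funext hzσ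
    rwa [hzy] at hzD

end Aux3


section Aux4

variable {X : Type*} [AddCommGroup X] [Module ℂ X] [MetricSpace X] [CompleteSpace X]
  [IsTopologicalAddGroup X] [ContinuousSMul ℂ X]

/-- The set of nodes alive at stage `n`: tree index and address within the tree. -/
def mycNodeSet (n : ℕ) : Set (ℕ × List Bool) :=
  { a | a.1 ≤ n ∧ a.2.length = n - a.1 }

lemma mycNodeSet_finite (n : ℕ) : (mycNodeSet n).Finite := by
  apply Set.Finite.subset ((Set.finite_Iic n).prod (List.finite_length_le Bool n))
  rintro ⟨t, s⟩ ⟨ht, hs⟩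
  exact ⟨ht, by simp only [mem_setOf_eq] at hs ⊢; omega⟩

/-- The invariant satisfied by the configuration at stage `n`. -/
def mycGood (V : ℕ → Set X) (G : ℕ → (m : ℕ) → Set (Fin m → X)) (n : ℕ)
    (c : ℕ × List Bool → X) (ρ : ℝ) : Prop :=
  0 < ρ ∧ ρ ≤ (1/2)^n ∧
  (∀ a ∈ mycNodeSet n, Metric.closedBall (c a) ρ ⊆ V a.1) ∧
  (∀ (m : ℕ) (σ : Fin m → ℕ × List Bool), (∀ i, σ i ∈ mycNodeSet n) →
    Function.Injective σ →
    ∀ y : Fin m → X, (∀ i, y i ∈ Metric.closedBall (c (σ i)) ρ) → y ∈ G n m)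

lemma myc_base (V : ℕ → Set X) (hVo : ∀ t, IsOpen (V t)) (hVne : ∀ t, (V t).Nonempty)
    (G : ℕ → (m : ℕ) → Set (Fin m → X)) (hGo : ∀ n m, IsOpen (G n m))
    (hGd : ∀ n m, Dense (G n m)) :
    ∃ c ρ, mycGood V G 0 c ρ := by
  classical
  haveI : Fintype ↥(mycNodeSet 0) := (mycNodeSet_finite 0).fintype
  obtain ⟨q, ρ, hρ0, hρ1, hq1, hq2⟩ := aux_key (X := X) (ι := ↥(mycNodeSet 0))
    (fun a => V a.1.1) (fun a => hVo _) (fun a => hVne _) (G 0) (hGo 0) (hGd 0) 1 one_pos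
  refine ⟨fun a => if h : a ∈ mycNodeSet 0 then q ⟨a, h⟩ else (hVne 0).some, ρ, hρ0, by
    simpa using hρ1, ?_, ?_⟩
  · intro a ha
    simp only [dif_pos ha]
    exact (hq1 ⟨a, ha⟩)
  · intro m σ hσmem hσinj y hy
    refine hq2 m (fun i => ⟨σ i, hσmem i⟩) ?_ y ?_
    · intro i j hij
      exact hσinj (by simpa using congrArg Subtype.val hij)
    · intro i
      have := hy i
      simp only [dif_pos (hσmem i), mem_closedBall] at this
      exact this

lemma myc_step (V : ℕ → Set X) (hVo : ∀ t, IsOpen (V t)) (hVne : ∀ t, (V t).Nonempty)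
    (G : ℕ → (m : ℕ) → Set (Fin m → X)) (hGo : ∀ n m, IsOpen (G n m))
    (hGd : ∀ n m, Dense (G n m)) (n : ℕ) (c : ℕ × List Bool → X) (ρ : ℝ)
    (h : mycGood V G n c ρ) :
    ∃ c' ρ', mycGood V G (n+1) c' ρ' ∧
      ∀ a ∈ mycNodeSet n, ∀ b : Bool,
        Metric.closedBall (c' (a.1, b :: a.2)) ρ' ⊆ Metric.closedBall (c a) ρ := by
  classical
  obtain ⟨hρ0, hρle, hV6, hG4⟩ := h
  haveI : Fintype ↥(mycNodeSet (n+1)) := (mycNodeSet_finite (n+1)).fintype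
  -- the parent of a node at stage n+1 whose tree is old
  have hparent : ∀ a : ℕ × List Bool, a ∈ mycNodeSet (n+1) → a.1 ≤ n →
      (a.1, a.2.tail) ∈ mycNodeSet n := by
    rintro ⟨t, s⟩ ⟨ht, hs⟩ htn
    refine ⟨htn, ?_⟩
    simp only [mem_setOf_eq] at hs ⊢
    rw [List.length_tail, hs]
    omega
  set O : ↥(mycNodeSet (n+1)) → Set X := fun a =>
    if a.1.1 ≤ n then Metric.ball (c (a.1.1, a.1.2.tail)) ρ else V (n+1) with hO
  have hOo : ∀ a, IsOpen (O a) := by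
    intro a; rw [hO]; dsimp only; split
    · exact isOpen_ball
    · exact hVo _
  have hOne : ∀ a, (O a).Nonempty := by
    intro a; rw [hO]; dsimp only; split
    · exact ⟨_, mem_ball_self hρ0⟩
    · exact hVne _
  obtain ⟨q, ρ', hρ'0, hρ'1, hq1, hq2⟩ := aux_key (X := X) (ι := ↥(mycNodeSet (n+1)))
    O hOo hOne (G (n+1)) (hGo (n+1)) (hGd (n+1)) ((1/2)^(n+1)) (by positivity)
  refine ⟨fun a => if h : a ∈ mycNodeSet (n+1) then q ⟨a, h⟩ else c a, ρ',
    ⟨hρ'0, hρ'1, ?_, ?_⟩, ?_⟩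
  · -- the balls are inside the basic open sets
    intro a ha
    simp only [dif_pos ha]
    refine (hq1 ⟨a, ha⟩).trans ?_
    rw [hO]; dsimp only; split
    · next hle =>
      exact (Metric.ball_subset_closedBall).trans (hV6 _ (hparent a ha hle))
    · next hgt =>
      have h1 : a.1 ≤ n + 1 := ha.1
      have : a.1 = n + 1 := by omega
      rw [this]
  · -- tuples from distinct balls lie in `G (n+1)`
    intro m σ hσmem hσinj y hy
    refine hq2 m (fun i => ⟨σ i, hσmem i⟩) ?_ y ?_
    · intro i j hij
      exact hσinj (by simpa using congrArg Subtype.val hij)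
    · intro i
      have := hy i
      simp only [dif_pos (hσmem i), mem_closedBall] at this
      exact this
  · -- nesting in the parent's ball
    intro a ha b
    have ha1 : a.1 ≤ n := ha.1
    have ha2 : a.2.length = n - a.1 := ha.2
    have hchild : (a.1, b :: a.2) ∈ mycNodeSet (n+1) := by
      refine ⟨by omega, ?_⟩
      simp only [mem_setOf_eq, List.length_cons]
      omega
    simp only [dif_pos hchild]
    refine (hq1 ⟨_, hchild⟩).trans ?_
    rw [hO]; dsimp only
    rw [if_pos (show a.1 ≤ n from ha.1)]
    simp only [List.tail_cons]
    exact Metric.ball_subset_closedBall.trans (by rw [Prod.mk.eta])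


lemma myc_construct (V : ℕ → Set X) (hVo : ∀ t, IsOpen (V t)) (hVne : ∀ t, (V t).Nonempty)
    (G : ℕ → (m : ℕ) → Set (Fin m → X)) (hGo : ∀ n m, IsOpen (G n m))
    (hGd : ∀ n m, Dense (G n m))
    (hGind : ∀ n m y, y ∈ G n m → LinearIndependent ℂ y) :
    ∃ (C : ℕ → Set X) (xd : ℕ → X),
      (∀ t, (C t).Nonempty) ∧ (∀ t, Perfect (C t)) ∧ (∀ t, IsCompact (C t)) ∧
      (∀ t, C t ⊆ V t) ∧
      (∀ (m : ℕ) (x : Fin m → X), (∀ i, ∃ t, x i ∈ C t) → Function.Injective x →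
        ∀ j : ℕ, ∃ N, j ≤ N ∧ x ∈ G N m) ∧
      (∀ t, xd t ∈ C t) ∧
      (∀ n : ℕ, (fun t : Fin (n + 1) => xd t.1) ∈ G n (n + 1)) := by
  classical
  obtain ⟨c₀, ρ₀, h₀⟩ := myc_base V hVo hVne G hGo hGd
  have hstep := myc_step V hVo hVne G hGo hGd
  choose! sc sρ hsgood hsnest using hstep
  set F : ℕ → ((ℕ × List Bool) → X) × ℝ :=
    fun n => Nat.rec (c₀, ρ₀) (fun k p => (sc k p.1 p.2, sρ k p.1 p.2)) n with hF
  have hFs : ∀ n, F (n+1) = (sc n (F n).1 (F n).2, sρ n (F n).1 (F n).2) := fun _ => rfl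
  have hgood : ∀ n, mycGood V G n (F n).1 (F n).2 := by
    intro n
    induction n with
    | zero => exact h₀
    | succ k ih => rw [hFs k]; exact hsgood k _ _ ih
  set cc : ℕ → (ℕ × List Bool) → X := fun n => (F n).1 with hcc
  set rr : ℕ → ℝ := fun n => (F n).2 with hrr
  have hnest : ∀ n, ∀ a ∈ mycNodeSet n, ∀ b : Bool,
      Metric.closedBall (cc (n+1) (a.1, b :: a.2)) (rr (n+1)) ⊆
        Metric.closedBall (cc n a) (rr n) := by
    intro n a ha b
    exact hsnest n (F n).1 (F n).2 (hgood n) a ha b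
  have hr0 : ∀ n, 0 < rr n := fun n => (hgood n).1
  have hrle : ∀ n, rr n ≤ (1/2)^n := fun n => (hgood n).2.1
  have hV6 : ∀ n, ∀ a ∈ mycNodeSet n, Metric.closedBall (cc n a) (rr n) ⊆ V a.1 :=
    fun n => (hgood n).2.2.1
  have hG4 := fun n => (hgood n).2.2.2
  -- ball of a node at its intrinsic stage
  set NB : ℕ × List Bool → Set X :=
    fun a => Metric.closedBall (cc (a.1 + a.2.length) a) (rr (a.1 + a.2.length)) with hNB
  have hmem_node : ∀ a : ℕ × List Bool, a ∈ mycNodeSet (a.1 + a.2.length) :=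
    fun a => ⟨Nat.le_add_right _ _, by omega⟩
  have hNB1 : ∀ t (s : List Bool) (b : Bool), NB (t, b :: s) ⊆ NB (t, s) := by
    intro t s b
    have h1 := hnest (t + s.length) (t, s) (hmem_node (t, s)) b
    rw [hNB]
    exact h1
  have hNBapp : ∀ t (l s : List Bool), NB (t, l ++ s) ⊆ NB (t, s) := by
    intro t l
    induction l with
    | nil => intro s; exact subset_rfl
    | cons b l ih =>
      intro s
      have : (b :: l) ++ s = b :: (l ++ s) := rfl
      rw [this]
      exact (hNB1 t (l ++ s) b).trans (ih s)
  set D : ℕ → ℕ → Set X := fun t n => ⋃ s ∈ {s : List Bool | s.length = n}, NB (t, s)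
    with hD
  set C : ℕ → Set X := fun t => ⋂ n, D t n with hC
  -- limits of branches
  have hlim : ∀ t (s₀ : List Bool), ∃ x : X,
      ∀ n, x ∈ NB (t, List.replicate n false ++ s₀) := by
    intro t s₀
    set g : ℕ → X := fun n =>
      cc (t + (List.replicate n false ++ s₀).length) (t, List.replicate n false ++ s₀) with hg
    have hmemg : ∀ n, g n ∈ NB (t, List.replicate n false ++ s₀) := by
      intro n
      rw [hg, hNB]
      exact Metric.mem_closedBall_self (hr0 _).le
    have hmono : ∀ N n, N ≤ n →
        NB (t, List.replicate n false ++ s₀) ⊆ NB (t, List.replicate N false ++ s₀) := by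
      intro N n h
      have he : List.replicate n false ++ s₀ =
          List.replicate (n - N) false ++ (List.replicate N false ++ s₀) := by
        rw [← List.append_assoc, ← List.replicate_add]
        congr 2
        omega
      rw [he]
      exact hNBapp _ _ _
    have hlen : ∀ n : ℕ, (List.replicate n false ++ s₀).length = n + s₀.length := by
      intro n; simp
    have hdist : ∀ N n m, N ≤ n → N ≤ m → dist (g n) (g m) ≤ 2 * (1/2)^N := by
      intro N n m hn hm
      have h1 := hmono N n hn (hmemg n)
      have h2 := hmono N m hm (hmemg m)
      rw [hNB] at h1 h2
      have hd : dist (g n) (g m) ≤ rr _ + rr _ :=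
        dist_triangle_right (g n) (g m) (cc (t + (List.replicate N false ++ s₀).length)
          (t, List.replicate N false ++ s₀)) |>.trans
          (add_le_add (Metric.mem_closedBall.1 h1) (Metric.mem_closedBall.1 h2))
      refine hd.trans ?_
      have hp : ((1:ℝ)/2) ^ (t + (List.replicate N false ++ s₀).length) ≤ (1/2)^N := by
        apply pow_le_pow_of_le_one (by norm_num) (by norm_num)
        rw [hlen]; omega
      have := (hrle (t + (List.replicate N false ++ s₀).length)).trans hp
      linarith
    have hcauchy : CauchySeq g := by
      refine cauchySeq_of_le_tendsto_0 (fun N => 2 * (1/2)^N) (fun n m N hn hm => hdist N n m hn hm) ?_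
      have h1 : Tendsto (fun N : ℕ => ((1:ℝ)/2)^N) atTop (𝓝 0) :=
        tendsto_pow_atTop_nhds_zero_of_lt_one (by norm_num) (by norm_num)
      simpa using h1.const_mul 2
    obtain ⟨x, hx⟩ := cauchySeq_tendsto_of_complete hcauchy
    refine ⟨x, fun n => ?_⟩
    have hcl : IsClosed (NB (t, List.replicate n false ++ s₀)) := by
      rw [hNB]; exact Metric.isClosed_closedBall
    refine hcl.mem_of_tendsto hx ?_
    filter_upwards [Filter.eventually_ge_atTop n] with m hm
    exact hmono n m hm (hmemg m)
  choose bp hbp using hlim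
  have hbp0 : ∀ t s₀, bp t s₀ ∈ NB (t, s₀) := by
    intro t s₀
    have := hbp t s₀ 0
    simpa using this
  have hCmem : ∀ t s₀, bp t s₀ ∈ C t := by
    intro t s₀
    rw [hC]
    refine mem_iInter.2 fun n => ?_
    rw [hD]
    by_cases h : s₀.length ≤ n
    · refine mem_biUnion (show (List.replicate (n - s₀.length) false ++ s₀) ∈
        {s : List Bool | s.length = n} from by simp; omega) ?_
      exact hbp t s₀ (n - s₀.length)
    · have hsplit : s₀ = s₀.take (s₀.length - n) ++ s₀.drop (s₀.length - n) :=
        (List.take_append_drop _ _).symm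
      have hd : bp t s₀ ∈ NB (t, s₀.drop (s₀.length - n)) := by
        refine hNBapp t (s₀.take (s₀.length - n)) _ ?_
        rw [← hsplit]
        exact hbp0 t s₀
      refine mem_biUnion (show s₀.drop (s₀.length - n) ∈ {s : List Bool | s.length = n} from ?_) hd
      simp only [mem_setOf_eq, List.length_drop]
      omega
  -- disjointness of balls of distinct nodes at the same stage
  have hdisj : ∀ n, ∀ a ∈ mycNodeSet n, ∀ b ∈ mycNodeSet n, a ≠ b → ∀ x : X,
      x ∈ Metric.closedBall (cc n a) (rr n) → x ∈ Metric.closedBall (cc n b) (rr n) → False := by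
    intro n a ha b hb hab x hxa hxb
    have hσmem : ∀ i : Fin 2, (![a, b] : Fin 2 → ℕ × List Bool) i ∈ mycNodeSet n := by
      intro i
      fin_cases i
      · exact ha
      · exact hb
    have hσinj : Function.Injective (![a, b] : Fin 2 → ℕ × List Bool) := by
      intro i j hij
      fin_cases i <;> fin_cases j <;>
        simp only [Matrix.cons_val_zero, Matrix.cons_val_one, Matrix.head_cons] at hij <;>
        first
          | rfl
          | exact absurd hij hab
          | exact absurd hij.symm hab
    have hy : ∀ i : Fin 2, (![x, x] : Fin 2 → X) i ∈
        Metric.closedBall (cc n ((![a, b] : Fin 2 → ℕ × List Bool) i)) (rr n) := by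
      intro i
      fin_cases i
      · exact hxa
      · exact hxb
    have hmem := hG4 n 2 ![a, b] hσmem hσinj ![x, x] hy
    have hind := hGind n 2 _ hmem
    have h01 := hind.injective (a₁ := 0) (a₂ := 1) (by simp)
    exact absurd h01 (by decide)
  -- every point of `C t` sits in a node ball at every stage `N ≥ t`
  have hstagenode : ∀ t (x : X), x ∈ C t → ∀ N, t ≤ N → ∃ s : List Bool,
      (t, s) ∈ mycNodeSet N ∧ x ∈ Metric.closedBall (cc N (t, s)) (rr N) := by
    intro t x hx N htN
    have h1 : x ∈ D t (N - t) := by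
      rw [hC] at hx
      exact mem_iInter.1 hx (N - t)
    rw [hD] at h1
    obtain ⟨s, hs, hmem⟩ := mem_iUnion₂.1 h1
    simp only [mem_setOf_eq] at hs
    have hst : t + s.length = N := by omega
    rw [hNB] at hmem
    dsimp only at hmem
    rw [hst] at hmem
    exact ⟨s, ⟨htN, show s.length = N - t by omega⟩, hmem⟩
  -- main property for injective tuples
  have hmain : ∀ (m : ℕ) (x : Fin m → X), (∀ i, ∃ t, x i ∈ C t) → Function.Injective x →
      ∀ j : ℕ, ∃ N, j ≤ N ∧ x ∈ G N m := by
    intro m x hxC hxinj j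
    choose tt hxt using hxC
    -- choose the node of each point at each stage
    have H : ∀ (i : Fin m) (N : ℕ), ∃ s : List Bool, tt i ≤ N →
        ((tt i, s) ∈ mycNodeSet N ∧ x i ∈ Metric.closedBall (cc N (tt i, s)) (rr N)) := by
      intro i N
      by_cases h : tt i ≤ N
      · obtain ⟨s, h1, h2⟩ := hstagenode (tt i) (x i) (hxt i) N h
        exact ⟨s, fun _ => ⟨h1, h2⟩⟩
      · exact ⟨[], fun h' => absurd h' h⟩
    choose sn hsn using H
    -- uniqueness of the node at each stage
    have huniq : ∀ (i : Fin m) (N : ℕ) (a : ℕ × List Bool), tt i ≤ N → a ∈ mycNodeSet N →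
        x i ∈ Metric.closedBall (cc N a) (rr N) → a = (tt i, sn i N) := by
      intro i N a hiN ha hxa
      by_contra hne
      exact hdisj N a ha (tt i, sn i N) (hsn i N hiN).1 hne (x i) hxa (hsn i N hiN).2
    -- the node at stage `N+1` is a child of the node at stage `N`
    have hchild : ∀ (i : Fin m) (N : ℕ), tt i ≤ N → ∃ b : Bool,
        sn i (N + 1) = b :: sn i N := by
      intro i N hiN
      obtain ⟨hmem1, hx1⟩ := hsn i (N + 1) (by omega)
      have hlen : (sn i (N+1)).length = N + 1 - tt i := hmem1.2
      have hne : sn i (N+1) ≠ [] := by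
        intro h
        rw [h] at hlen
        simp only [List.length_nil] at hlen
        omega
      obtain ⟨b, s', heq⟩ := List.exists_cons_of_ne_nil hne
      have hlen' : s'.length = N - tt i := by
        rw [heq] at hlen
        simp only [List.length_cons] at hlen
        omega
      have hs'mem : (tt i, s') ∈ mycNodeSet N := ⟨hiN, hlen'⟩
      have hxs' : x i ∈ Metric.closedBall (cc N (tt i, s')) (rr N) := by
        apply hnest N (tt i, s') hs'mem b
        rw [← heq]
        exact hx1
      have h4 := huniq i N (tt i, s') hiN hs'mem hxs'
      have h5 : s' = sn i N := congrArg Prod.snd h4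
      exact ⟨b, by rw [heq, h5]⟩
    -- distinctness of nodes propagates upward
    have hup : ∀ (i k : Fin m) (N : ℕ), tt i ≤ N → tt k ≤ N →
        (tt i, sn i N) ≠ (tt k, sn k N) → ∀ M, N ≤ M →
        (tt i, sn i M) ≠ (tt k, sn k M) := by
      intro i k N hiN hkN hne M hNM
      induction M, hNM using Nat.le_induction with
      | base => exact hne
      | succ M hNM ih =>
        obtain ⟨b1, hb1⟩ := hchild i M (le_trans hiN hNM)
        obtain ⟨b2, hb2⟩ := hchild k M (le_trans hkN hNM)
        intro hEq
        have h1 : tt i = tt k := congrArg Prod.fst hEq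
        have h2 : sn i (M+1) = sn k (M+1) := congrArg Prod.snd hEq
        rw [hb1, hb2] at h2
        have h3 : sn i M = sn k M := by
          injection h2
        exact ih (by rw [h1, h3])
    -- a stage where the nodes of two distinct points are distinct
    have htendd : Tendsto (fun N : ℕ => 2 * ((1:ℝ)/2)^N) atTop (𝓝 0) := by
      have h1 : Tendsto (fun N : ℕ => ((1:ℝ)/2)^N) atTop (𝓝 0) :=
        tendsto_pow_atTop_nhds_zero_of_lt_one (by norm_num) (by norm_num)
      simpa using h1.const_mul 2
    have hpairN : ∀ i k : Fin m, i ≠ k → ∃ N, tt i ≤ N ∧ tt k ≤ N ∧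
        (tt i, sn i N) ≠ (tt k, sn k N) := by
      intro i k hik
      by_contra hcon
      push_neg at hcon
      have hdd : ∀ N, max (tt i) (tt k) ≤ N → dist (x i) (x k) ≤ 2 * ((1:ℝ)/2)^N := by
        intro N hN
        have hiN : tt i ≤ N := le_trans (le_max_left _ _) hN
        have hkN : tt k ≤ N := le_trans (le_max_right _ _) hN
        have heq := hcon N hiN hkN
        have h1 := (hsn i N hiN).2
        have h2 := (hsn k N hkN).2
        rw [← heq] at h2
        have hd : dist (x i) (x k) ≤ rr N + rr N :=
          (dist_triangle_right (x i) (x k) (cc N (tt i, sn i N))).trans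
            (add_le_add (Metric.mem_closedBall.1 h1) (Metric.mem_closedBall.1 h2))
        have := hrle N
        linarith
      have h0 : dist (x i) (x k) ≤ 0 := by
        refine ge_of_tendsto htendd ?_
        filter_upwards [Filter.eventually_ge_atTop (max (tt i) (tt k))] with N hN
        exact hdd N hN
      have : x i = x k := by
        rw [← dist_le_zero]
        exact h0
      exact hik (hxinj this)
    choose! pN hpN1 hpN2 hpN3 using hpairN
    set N₀ := max j (max (Finset.univ.sup fun i => tt i)
      (Finset.univ.sup fun p : Fin m × Fin m => pN p.1 p.2)) with hN₀
    have htN : ∀ i, tt i ≤ N₀ := by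
      intro i
      refine le_trans (Finset.le_sup (Finset.mem_univ i)) ?_
      rw [hN₀]
      exact le_trans (le_max_left _ _) (le_max_right _ _)
    have hple : ∀ i k : Fin m, pN i k ≤ N₀ := by
      intro i k
      refine le_trans (Finset.le_sup (f := fun p : Fin m × Fin m => pN p.1 p.2)
        (Finset.mem_univ (i, k))) ?_
      rw [hN₀]
      exact le_trans (le_max_right _ _) (le_max_right _ _)
    refine ⟨N₀, le_max_left _ _, ?_⟩
    refine hG4 N₀ m (fun i => (tt i, sn i N₀)) (fun i => (hsn i N₀ (htN i)).1) ?_ x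
      (fun i => (hsn i N₀ (htN i)).2)
    intro i k heq
    by_contra hne
    exact hup i k (pN i k) (hpN1 i k hne) (hpN2 i k hne) (hpN3 i k hne) N₀ (hple i k) heq
  -- closedness
  have hDclosed : ∀ t n, IsClosed (D t n) := by
    intro t n
    rw [hD]
    refine Set.Finite.isClosed_biUnion (List.finite_length_eq Bool n) ?_
    intro s _
    rw [hNB]
    exact Metric.isClosed_closedBall
  have hCclosed : ∀ t, IsClosed (C t) := by
    intro t
    rw [hC]
    exact isClosed_iInter (fun n => hDclosed t n)
  have hpowle : ∀ t n : ℕ, ((1:ℝ)/2) ^ (t + n) ≤ ((1:ℝ)/2) ^ n := by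
    intro t n
    apply pow_le_pow_of_le_one (by norm_num) (by norm_num)
    omega
  refine ⟨C, fun t => bp t [], fun t => ⟨bp t [], hCmem t []⟩, ?_, ?_, ?_, hmain,
    fun t => hCmem t [], ?_⟩
  · -- perfect
    intro t
    refine ⟨hCclosed t, ?_⟩
    intro x hx
    rw [accPt_iff_nhds]
    intro U hU
    obtain ⟨ε, hε, hball⟩ := Metric.mem_nhds_iff.1 hU
    obtain ⟨n, hn⟩ := exists_pow_lt_of_lt_one (show (0:ℝ) < ε/2 by linarith)
      (show (1:ℝ)/2 < 1 by norm_num)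
    obtain ⟨s, hsmem, hxs⟩ := hstagenode t x hx (t + n) (by omega)
    obtain ⟨s', hs'mem, hxs'⟩ := hstagenode t x hx (t + n + 1) (by omega)
    have hsl : s.length = n := by
      have h : s.length = t + n - t := hsmem.2
      omega
    have hlen' : s'.length = n + 1 := by
      have h : s'.length = t + n + 1 - t := hs'mem.2
      omega
    have hs'ne : s' ≠ [] := by
      intro h; rw [h] at hlen'; simp only [List.length_nil] at hlen'; omega
    obtain ⟨b, s'', heq⟩ := List.exists_cons_of_ne_nil hs'ne
    have hls'' : s''.length = n := by
      rw [heq] at hlen'; simp only [List.length_cons] at hlen'; omega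
    have hs''mem : (t, s'') ∈ mycNodeSet (t + n) :=
      ⟨by omega, show s''.length = (t + n) - t by omega⟩
    have hxs'' : x ∈ Metric.closedBall (cc (t+n) (t, s'')) (rr (t+n)) := by
      apply hnest (t+n) (t, s'') hs''mem b
      rw [heq] at hxs'
      exact hxs'
    have hss : s'' = s := by
      by_contra hne
      refine hdisj (t+n) (t, s'') hs''mem (t, s) hsmem ?_ x hxs'' hxs
      intro hEq
      exact hne (congrArg Prod.snd hEq)
    set y := bp t ((!b) :: s) with hy
    have hymem : y ∈ C t := hCmem t _
    have hyball : y ∈ NB (t, (!b) :: s) := hbp0 t _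
    have hyball' : y ∈ Metric.closedBall (cc (t+n+1) (t, (!b) :: s)) (rr (t+n+1)) := by
      rw [hNB] at hyball
      dsimp only at hyball
      rw [show t + ((!b) :: s).length = t + n + 1 from by
        simp only [List.length_cons]; omega] at hyball
      exact hyball
    have hxball' : x ∈ Metric.closedBall (cc (t+n+1) (t, b :: s)) (rr (t+n+1)) := by
      rw [heq, hss] at hxs'
      exact hxs'
    have hyne : y ≠ x := by
      intro h
      refine hdisj (t+n+1) (t, (!b) :: s) ?_ (t, b :: s) ?_ ?_ x ?_ hxball'
      · exact ⟨by omega, show ((!b) :: s).length = (t+n+1) - t by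
          simp only [List.length_cons]; omega⟩
      · exact ⟨by omega, show (b :: s).length = (t+n+1) - t by
          simp only [List.length_cons]; omega⟩
      · intro hEq
        have := congrArg Prod.snd hEq
        simp only [List.cons.injEq] at this
        exact (Bool.not_ne_self b) this.1
      · rw [← h]; exact hyball'
    have hyNBs : y ∈ Metric.closedBall (cc (t+n) (t, s)) (rr (t+n)) := by
      have h1 : y ∈ NB (t, s) := hNB1 t s (!b) hyball
      rw [hNB] at h1
      dsimp only at h1
      rw [show t + s.length = t + n from by omega] at h1
      exact h1
    have hdyx : dist y x < ε := by
      have hd : dist y x ≤ rr (t+n) + rr (t+n) :=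
        (dist_triangle_right y x (cc (t+n) (t, s))).trans
          (add_le_add (Metric.mem_closedBall.1 hyNBs) (Metric.mem_closedBall.1 hxs))
      have h2 := hrle (t+n)
      have h3 := hpowle t n
      linarith
    exact ⟨y, ⟨hball (Metric.mem_ball.2 hdyx), hymem⟩, hyne⟩
  · -- compactness
    intro t
    refine TotallyBounded.isCompact_of_isClosed ?_ (hCclosed t)
    rw [Metric.totallyBounded_iff]
    intro ε hε
    obtain ⟨n, hn⟩ := exists_pow_lt_of_lt_one hε (show (1:ℝ)/2 < 1 by norm_num)
    refine ⟨(fun s => cc (t + n) (t, s)) '' {s : List Bool | s.length = n},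
      (List.finite_length_eq Bool n).image _, ?_⟩
    intro x hx
    have hx2 : x ∈ D t n := by
      rw [hC] at hx
      exact mem_iInter.1 hx n
    rw [hD] at hx2
    obtain ⟨s, hs, hmem⟩ := mem_iUnion₂.1 hx2
    simp only [mem_setOf_eq] at hs
    refine mem_biUnion (mem_image_of_mem _ hs) ?_
    rw [hNB] at hmem
    dsimp only at hmem
    rw [hs] at hmem
    rw [Metric.mem_ball]
    have h1 := Metric.mem_closedBall.1 hmem
    have h2 := hrle (t + n)
    have h3 := hpowle t n
    calc dist x (cc (t+n) (t, s)) ≤ rr (t+n) := h1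
      _ < ε := by linarith
  · -- contained in the basic open set
    intro t x hx
    obtain ⟨s, hsmem, hxs⟩ := hstagenode t x hx t le_rfl
    exact hV6 t (t, s) hsmem hxs
  · -- the distinguished tuple
    intro n
    refine hG4 n (n+1) (fun t : Fin (n+1) => ((t : ℕ), List.replicate (n - (t : ℕ)) false))
      ?_ ?_ _ ?_
    · intro i
      exact ⟨Nat.lt_succ_iff.1 i.isLt, show (List.replicate (n - (i:ℕ)) false).length = n - (i:ℕ)
        from List.length_replicate⟩
    · intro a b h
      exact Fin.ext (congrArg Prod.fst h)
    · intro i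
      have h1 := hbp (i : ℕ) [] (n - (i : ℕ))
      rw [List.append_nil] at h1
      rw [hNB] at h1
      dsimp only at h1
      rw [show (i:ℕ) + (List.replicate (n - (i:ℕ)) false).length = n from by
        rw [List.length_replicate]
        omega] at h1
      exact h1



end Aux4

end MycielskiAux

open Metric Set


/-- Let `X` be an infinite-dimensional separable F-space over ℂ and let
`R m` be a residual subset of `X^m` for each `m`. Then for every `ℓ` there exist a
Mycielski set `K` (every tuple of pairwise distinct points of `K` lies in the
corresponding `R m`, and `K` meets every nonempty open set in a Cantor set) and
pairwise disjoint countable dense subsets `E 1, ..., E ℓ` of `X` contained in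
`K ∖ {0}` whose union is linearly independent. -/
theorem exists_disjoint_dense_linearIndependent
    {X : Type*} [AddCommGroup X] [Module ℂ X] [MetricSpace X] [CompleteSpace X]
    [IsTopologicalAddGroup X] [ContinuousSMul ℂ X] [TopologicalSpace.SeparableSpace X]
    (hinf : ¬ FiniteDimensional ℂ X)
    (R : (m : ℕ) → Set (Fin m → X))
    (hR : ∀ m, R m ∈ residual (Fin m → X)) :
    ∀ ℓ : ℕ, ∃ (K : Set X) (E : Fin ℓ → Set X),
      (∀ U : Set X, IsOpen U → U.Nonempty →
        ∃ C : Set X, C ⊆ K ∩ U ∧ C.Nonempty ∧ Perfect C ∧ IsCompact C) ∧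
      (∀ (m : ℕ) (x : Fin m → X), (∀ i, x i ∈ K) → Function.Injective x → x ∈ R m) ∧
      (∀ j, E j ⊆ K \ {0}) ∧
      (∀ j, (E j).Countable) ∧
      (∀ j, Dense (E j)) ∧
      (Pairwise fun j j' => Disjoint (E j) (E j')) ∧
      LinearIndependent ℂ (fun v : ↥(⋃ j, E j) => (v : X)) := by
  classical
  intro ℓ
  haveI : Nonempty X := ⟨0⟩
  set L := max ℓ 1 with hLdef
  have hL1 : 0 < L := lt_of_lt_of_le one_pos (le_max_right _ _)
  set u : ℕ → X := TopologicalSpace.denseSeq X with hu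
  have hdu : DenseRange u := TopologicalSpace.denseRange_denseSeq X
  set V : ℕ → Set X := fun t =>
    Metric.ball (u (Nat.unpair (t / L)).1) (1 / ((Nat.unpair (t / L)).2 + 1)) with hV
  have hVo : ∀ t, IsOpen (V t) := fun t => Metric.isOpen_ball
  have hVne : ∀ t, (V t).Nonempty := fun t => ⟨_, Metric.mem_ball_self (by positivity)⟩
  have hVbasis : ∀ U : Set X, IsOpen U → U.Nonempty → ∀ j : ℕ, j < L →
      ∃ t, t % L = j ∧ V t ⊆ U := by
    intro U hUo hUne j hj
    obtain ⟨x, hx⟩ := hUne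
    obtain ⟨ε, hε, hball⟩ := Metric.isOpen_iff.1 hUo x hx
    obtain ⟨i, hi⟩ := hdu.exists_dist_lt x (show (0:ℝ) < ε/4 by linarith)
    obtain ⟨q, hq⟩ := exists_nat_one_div_lt (show (0:ℝ) < ε/2 by linarith)
    refine ⟨L * Nat.pair i q + j, ?_, ?_⟩
    · rw [Nat.mul_add_mod]
      exact Nat.mod_eq_of_lt hj
    · have hdiv : (L * Nat.pair i q + j) / L = Nat.pair i q := by
        rw [Nat.mul_add_div hL1, Nat.div_eq_of_lt hj, add_zero]
      intro z hz
      rw [hV] at hz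
      simp only [hdiv, Nat.unpair_pair] at hz
      apply hball
      rw [Metric.mem_ball] at hz ⊢
      have h1 : dist z x ≤ dist z (u i) + dist x (u i) := dist_triangle_right z x (u i)
      have h2 : dist z (u i) < 1 / ((q:ℝ) + 1) := hz
      have h3 : ((q:ℝ) + 1) = ((q+1 : ℕ) : ℝ) := by push_cast; ring
      have h4 : (1:ℝ) / ((q:ℝ) + 1) < ε/2 := by
        rw [h3]
        exact_mod_cast hq
      linarith
  -- dense open sets witnessing residuality
  have hW : ∀ m, ∃ W : ℕ → Set (Fin m → X),
      (∀ j, IsOpen (W j)) ∧ (∀ j, Dense (W j)) ∧ (⋂ j, W j) ⊆ R m := by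
    intro m
    obtain ⟨S, hSo, hSd, hScnt, hSsub⟩ := mem_residual_iff.1 (hR m)
    obtain ⟨f, hf⟩ := (hScnt.insert univ).exists_eq_range (insert_nonempty _ _)
    refine ⟨f, ?_, ?_, ?_⟩
    · intro j
      have : f j ∈ insert univ S := by rw [hf]; exact mem_range_self j
      rcases this with h | h
      · rw [h]; exact isOpen_univ
      · exact hSo _ h
    · intro j
      have : f j ∈ insert univ S := by rw [hf]; exact mem_range_self j
      rcases this with h | h
      · rw [h]; exact dense_univ
      · exact hSd _ h
    · have h1 : ⋂ j, f j = ⋂₀ insert univ S := by rw [hf, sInter_range]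
      rw [h1, sInter_insert]
      exact (inter_subset_right).trans hSsub
  choose W hWo hWd hWR using hW
  set G : ℕ → (m : ℕ) → Set (Fin m → X) := fun n m =>
    (⋂ j : Fin (n+1), W m j) ∩ {y : Fin m → X | LinearIndependent ℂ y} with hG
  have hGo : ∀ n m, IsOpen (G n m) := fun n m =>
    (isOpen_iInter_of_finite fun j : Fin (n+1) => hWo m j).inter (aux_isOpen_indep m)
  have hGd : ∀ n m, Dense (G n m) := fun n m =>
    Dense.inter_of_isOpen_left
      (dense_iInter_of_isOpen (fun j : Fin (n+1) => hWo m j) (fun j => hWd m j))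
      (aux_dense_indep hinf m) (isOpen_iInter_of_finite fun j : Fin (n+1) => hWo m j)
  have hGind : ∀ n m y, y ∈ G n m → LinearIndependent ℂ y := fun n m y hy => hy.2
  obtain ⟨C, xd, hne, hperf, hcomp, hsubV, hmain, hxdC, hxdG⟩ :=
    myc_construct V hVo hVne G hGo hGd hGind
  -- the full distinguished family is linearly independent
  have hxd_li : LinearIndependent ℂ xd := by
    rw [linearIndependent_iff_finset_linearIndependent]
    intro s
    set n := s.sup id with hn
    have hprefix : LinearIndependent ℂ (fun t : Fin (n+1) => xd t.1) :=
      hGind n (n+1) _ (hxdG n)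
    have hcomp2 := hprefix.comp
      (fun i : s => (⟨(i : ℕ), Nat.lt_succ_of_le (Finset.le_sup (f := id) i.2)⟩ : Fin (n+1)))
      (by
        intro a b hab
        apply Subtype.ext
        exact congrArg Fin.val hab)
    exact hcomp2
  have hxd_inj : Function.Injective xd := hxd_li.injective
  have hxd_ne : ∀ t, xd t ≠ 0 := fun t => hxd_li.ne_zero t
  refine ⟨⋃ t, C t, fun j => xd '' {t : ℕ | t % L = (j : ℕ)}, ?_, ?_, ?_, ?_, ?_, ?_, ?_⟩
  · -- Cantor sets in every open set
    intro U hUo hUne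
    obtain ⟨t, _, hVU⟩ := hVbasis U hUo hUne 0 hL1
    exact ⟨C t, fun x hx => ⟨mem_iUnion.2 ⟨t, hx⟩, hVU (hsubV t hx)⟩, hne t, hperf t, hcomp t⟩
  · -- tuples of distinct points land in R m
    intro m x hxK hxInj
    apply hWR m
    refine mem_iInter.2 fun j => ?_
    obtain ⟨N, hjN, hGmem⟩ := hmain m x (fun i => mem_iUnion.1 (hxK i)) hxInj j
    exact mem_iInter.1 hGmem.1 ⟨j, by omega⟩
  · -- inside K \ {0}
    rintro j _ ⟨t, _, rfl⟩
    exact ⟨mem_iUnion.2 ⟨t, hxdC t⟩, hxd_ne t⟩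
  · -- countable
    intro j
    exact (Set.to_countable _).image _
  · -- dense
    intro j
    rw [dense_iff_inter_open]
    intro U hUo hUne
    obtain ⟨t, htmod, hVU⟩ := hVbasis U hUo hUne (j : ℕ)
      (lt_of_lt_of_le j.isLt (le_max_left ℓ 1))
    exact ⟨xd t, hVU (hsubV t (hxdC t)), ⟨t, htmod, rfl⟩⟩
  · -- pairwise disjoint
    intro j j' hjj'
    rw [Set.disjoint_left]
    rintro _ ⟨t, ht, rfl⟩ ⟨t', ht', heq⟩
    have : t' = t := hxd_inj heq
    rw [this] at ht'
    exact hjj' (Fin.ext (ht ▸ ht'.symm ▸ rfl))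
  · -- linear independence of the union
    rcases Nat.eq_zero_or_pos ℓ with hℓ | hℓ
    · subst hℓ
      have hempty : (⋃ j : Fin 0, xd '' {t : ℕ | t % L = (j : ℕ)}) = ∅ :=
        Set.iUnion_of_empty _
      haveI : IsEmpty ↥(⋃ j : Fin 0, xd '' {t : ℕ | t % L = (j : ℕ)}) :=
        Set.isEmpty_coe_sort.2 hempty
      exact linearIndependent_empty_type
    · have hLℓ : L = ℓ := max_eq_left hℓ
      have huni : (⋃ j : Fin ℓ, xd '' {t : ℕ | t % L = (j : ℕ)}) = Set.range xd := by
        ext y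
        constructor
        · rintro ⟨s, ⟨j, rfl⟩, t, _, rfl⟩
          exact mem_range_self t
        · rintro ⟨t, rfl⟩
          have hmod : t % L < ℓ := by
            rw [hLℓ]
            exact Nat.mod_lt t hℓ
          exact mem_iUnion.2 ⟨⟨t % L, hmod⟩, ⟨t, rfl, rfl⟩⟩
      rw [huni]
      exact hxd_li.linearIndepOn_id
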